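/- Let H be a complex Hilbert space, K a closed subspace of H, and U a bounded linear operator on H with the following properties: (1) U x = x for every x ∈ K; (2) U maps K⊥ into K⊥; (3) there exists α < 1 such that ‖U x‖ ≤ α‖x‖ for every x ∈ K⊥. Then for every sequence (x_k) in H with ‖x_k‖ ≤ 1 for all k and lim_{k→∞} ‖U x_k‖ = 1, one has lim_{k→∞} (I − U) x_k = 0. -/

import Mathlib

/-- If a bounded linear operator `U` fixes a closed subspace `K`, maps `Kᗮ` into
itself, and satisfies `‖U x‖ ≤ α ‖x‖` on `Kᗮ` for some `α < 1`, then for every sequence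
`(x_k)` with `‖x_k‖ ≤ 1` and `‖U x_k‖ → 1`, one has `(I - U) x_k → 0`. -/
theorem stmt_2 {H : Type*} [NormedAddCommGroup H] [InnerProductSpace ℂ H] [CompleteSpace H]
    (K : Submodule ℂ H) [CompleteSpace K] (U : H →L[ℂ] H)
    (hfix : ∀ x ∈ K, U x = x)
    (hinv : ∀ x ∈ Kᗮ, U x ∈ Kᗮ)
    (α : ℝ) (hα : α < 1)
    (hcon : ∀ x ∈ Kᗮ, ‖U x‖ ≤ α * ‖x‖)
    (x : ℕ → H) (hx : ∀ k, ‖x k‖ ≤ 1)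
    (hlim : Filter.Tendsto (fun k => ‖U (x k)‖) Filter.atTop (nhds 1)) :
    Filter.Tendsto (fun k => x k - U (x k)) Filter.atTop (nhds 0) := by
  set β := max α 0 with hβdef
  have hβ0 : (0:ℝ) ≤ β := le_max_right _ _
  have hβ1 : β < 1 := max_lt hα one_pos
  have hcon' : ∀ y ∈ Kᗮ, ‖U y‖ ≤ β * ‖y‖ := fun y hy =>
    (hcon y hy).trans (mul_le_mul_of_nonneg_right (le_max_left _ _) (norm_nonneg _))
  set p : ℕ → H := fun k => (K.orthogonalProjectionOnto (x k) : H) with hpdef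
  set q : ℕ → H := fun k => x k - p k with hqdef
  have hpK : ∀ k, p k ∈ K := fun k => (K.orthogonalProjectionOnto (x k)).2
  have hqK : ∀ k, q k ∈ Kᗮ := fun k => K.sub_starProjection_mem_orthogonal (x k)
  have hsum : ∀ k, x k = p k + q k := fun k => by simp [hqdef]
  have hUx : ∀ k, U (x k) = p k + U (q k) := fun k => by
    rw [hsum k, map_add, hfix _ (hpK k)]
  -- Pythagorean identities
  have hpyth1 : ∀ k, ‖x k‖ ^ 2 = ‖p k‖ ^ 2 + ‖q k‖ ^ 2 := fun k => by
    rw [hsum k]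
    simpa [pow_two] using norm_add_sq_eq_norm_sq_add_norm_sq_of_inner_eq_zero _ _
      (Submodule.inner_right_of_mem_orthogonal (hpK k) (hqK k))
  have hpyth2 : ∀ k, ‖U (x k)‖ ^ 2 = ‖p k‖ ^ 2 + ‖U (q k)‖ ^ 2 := fun k => by
    rw [hUx k]
    simpa [pow_two] using norm_add_sq_eq_norm_sq_add_norm_sq_of_inner_eq_zero _ _
      (Submodule.inner_right_of_mem_orthogonal (hpK k) (hinv _ (hqK k)))
  have hkey : ∀ k, (1 - β ^ 2) * ‖q k‖ ^ 2 ≤ 1 - ‖U (x k)‖ ^ 2 := by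
    intro k
    have h1 : ‖U (q k)‖ ^ 2 ≤ β ^ 2 * ‖q k‖ ^ 2 := by
      have := hcon' _ (hqK k)
      calc ‖U (q k)‖ ^ 2 ≤ (β * ‖q k‖) ^ 2 := by
            apply pow_le_pow_left₀ (norm_nonneg _) this
        _ = β ^ 2 * ‖q k‖ ^ 2 := by ring
    have h2 : ‖x k‖ ^ 2 ≤ 1 := by
      have := hx k
      nlinarith [norm_nonneg (x k)]
    nlinarith [hpyth1 k, hpyth2 k]
  have hβ2 : 0 < 1 - β ^ 2 := by nlinarith
  -- ‖q k‖² → 0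
  have hq2 : Filter.Tendsto (fun k => ‖q k‖ ^ 2) Filter.atTop (nhds 0) := by
    apply squeeze_zero (fun k => sq_nonneg _) (fun k => ?_)
      (g := fun k => (1 - ‖U (x k)‖ ^ 2) / (1 - β ^ 2))
    · have : Filter.Tendsto (fun k => (1 - ‖U (x k)‖ ^ 2) / (1 - β ^ 2))
          Filter.atTop (nhds ((1 - 1 ^ 2) / (1 - β ^ 2))) := by
        apply Filter.Tendsto.div_const
        exact (tendsto_const_nhds.sub (hlim.pow 2))
      simpa using this
    · simp only [le_div_iff₀ hβ2]
      linarith [hkey k]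
  have hqn : Filter.Tendsto (fun k => ‖q k‖) Filter.atTop (nhds 0) := by
    have := hq2.sqrt
    simpa [Real.sqrt_sq (norm_nonneg _)] using this
  -- conclude
  rw [tendsto_zero_iff_norm_tendsto_zero]
  apply squeeze_zero (fun k => norm_nonneg _) (fun k => ?_)
    (g := fun k => (1 + ‖U‖) * ‖q k‖)
  · simpa using hqn.const_mul (1 + ‖U‖)
  · have : x k - U (x k) = q k - U (q k) := by
      rw [hUx k, hsum k]; abel
    rw [this]
    calc ‖q k - U (q k)‖ ≤ ‖q k‖ + ‖U (q k)‖ := norm_sub_le _ _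
      _ ≤ ‖q k‖ + ‖U‖ * ‖q k‖ := by linarith [U.le_opNorm (q k)]
      _ = (1 + ‖U‖) * ‖q k‖ := by ring
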